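/- No bounded online algorithm for 2 colors: For every m ≥ 1 and every deterministic online 2-coloring algorithm (which must irrevocably color each inserted point upon arrival), there is an adversarial insertion sequence of points on the line such that at some time the present points contain m consecutive points of the same color. Specifically, the adversary can maintain the invariant that the present points form a block of red points followed by a block of blue points, by always inserting the next point between the two blocks. -/
import Mathlib

/-- Adversary run: list of inserted points, and the current gap (lo, hi).
All points colored `true` are `≤ lo`, all points colored `false` are `≥ hi`. -/
noncomputable def advRun (A : List ℝ → ℝ → Bool) : ℕ → List ℝ × ℝ × ℝ
  | 0 => ([], 0, 1)
  | k+1 =>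
    let s := advRun A k
    if A s.1 ((s.2.1 + s.2.2)/2)
    then (s.1 ++ [(s.2.1 + s.2.2)/2], (s.2.1 + s.2.2)/2, s.2.2)
    else (s.1 ++ [(s.2.1 + s.2.2)/2], s.2.1, (s.2.1 + s.2.2)/2)

/-- The point inserted at step `k`. -/
noncomputable def advPt (A : List ℝ → ℝ → Bool) (k : ℕ) : ℝ :=
  ((advRun A k).2.1 + (advRun A k).2.2)/2

lemma advRun_succ (A : List ℝ → ℝ → Bool) (k : ℕ) :
    advRun A (k+1) =
      if A (advRun A k).1 (advPt A k)
      then ((advRun A k).1 ++ [advPt A k], advPt A k, (advRun A k).2.2)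
      else ((advRun A k).1 ++ [advPt A k], (advRun A k).2.1, advPt A k) := by
  rw [advRun]; rfl

lemma lo_lt_hi (A : List ℝ → ℝ → Bool) (k : ℕ) :
    (advRun A k).2.1 < (advRun A k).2.2 := by
  induction k with
  | zero => norm_num [advRun]
  | succ k ih =>
      rw [advRun_succ]
      split_ifs <;> simp [advPt] <;> linarith

lemma lo_lt_pt (A : List ℝ → ℝ → Bool) (k : ℕ) :
    (advRun A k).2.1 < advPt A k := by
  have := lo_lt_hi A k; unfold advPt; linarith

lemma pt_lt_hi (A : List ℝ → ℝ → Bool) (k : ℕ) :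
    advPt A k < (advRun A k).2.2 := by
  have := lo_lt_hi A k; unfold advPt; linarith

lemma lo_mono (A : List ℝ → ℝ → Bool) (k : ℕ) :
    (advRun A k).2.1 ≤ (advRun A (k+1)).2.1 := by
  rw [advRun_succ]; split_ifs <;> simp
  exact (lo_lt_pt A k).le

lemma hi_anti (A : List ℝ → ℝ → Bool) (k : ℕ) :
    (advRun A (k+1)).2.2 ≤ (advRun A k).2.2 := by
  rw [advRun_succ]; split_ifs <;> simp
  exact (pt_lt_hi A k).le

lemma advRun_list (A : List ℝ → ℝ → Bool) (k : ℕ) :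
    (advRun A k).1 = (List.range k).map (advPt A) := by
  induction k with
  | zero => rfl
  | succ k ih => rw [advRun_succ]; split_ifs <;> simp [ih, List.range_succ]

/-- Invariant: points colored true are ≤ lo, points colored false are ≥ hi. -/
lemma adv_invariant (A : List ℝ → ℝ → Bool) (k : ℕ) :
    ∀ j < k, (A ((advRun A j).1) (advPt A j) = true → advPt A j ≤ (advRun A k).2.1) ∧
      (A ((advRun A j).1) (advPt A j) = false → (advRun A k).2.2 ≤ advPt A j) := by
  induction k with
  | zero => intro j hj; omega
  | succ k ih =>
      intro j hj
      rcases Nat.lt_succ_iff_lt_or_eq.mp hj with hj' | rfl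
      · obtain ⟨h1, h2⟩ := ih j hj'
        constructor
        · intro hc; exact (h1 hc).trans (lo_mono A k)
        · intro hc; exact (hi_anti A k).trans (h2 hc)
      · constructor
        · intro hc; rw [advRun_succ, if_pos hc]
        · intro hc
          rw [advRun_succ, if_neg (by simp [hc])]

lemma advPt_injective (A : List ℝ → ℝ → Bool) : Function.Injective (advPt A) := by
  intro i j e
  by_contra hne
  wlog h : i < j generalizing i j
  · exact this e.symm (Ne.symm hne) (by omega)
  obtain ⟨h1, h2⟩ := adv_invariant A j i h
  have hl := lo_lt_pt A j
  have hh := pt_lt_hi A j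
  cases hc : A ((advRun A i).1) (advPt A i) with
  | false => have := h2 hc; rw [e] at this; linarith
  | true => have := h1 hc; rw [e] at this; linarith

lemma take_ofFn_eq (A : List ℝ → ℝ → Bool) (n : ℕ) (i : Fin n) :
    (List.ofFn (fun j : Fin n => advPt A j)).take i = (advRun A i).1 := by
  rw [advRun_list]
  apply List.ext_getElem
  · simp
  · intro k h1 h2
    simp

lemma exists_top (m : ℕ) : ∀ s : Finset ℝ, m ≤ s.card →
    ∃ T, T ⊆ s ∧ T.card = m ∧ ∀ a ∈ s, ∀ b ∈ T, b ≤ a → a ∈ T := by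
  induction m with
  | zero => intro s _; exact ⟨∅, Finset.empty_subset s, rfl, by simp⟩
  | succ m ih =>
      intro s hs
      have hne : s.Nonempty := Finset.card_pos.mp (by omega)
      have hMmem : s.max' hne ∈ s := s.max'_mem hne
      have hcard : m ≤ (s.erase (s.max' hne)).card := by
        rw [Finset.card_erase_of_mem hMmem]; omega
      obtain ⟨T, hTsub, hTcard, hTup⟩ := ih (s.erase (s.max' hne)) hcard
      have hMnot : s.max' hne ∉ T := fun h => (Finset.mem_erase.mp (hTsub h)).1 rfl
      refine ⟨insert (s.max' hne) T, ?_, ?_, ?_⟩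
      · exact Finset.insert_subset hMmem (hTsub.trans (Finset.erase_subset _ _))
      · rw [Finset.card_insert_of_notMem hMnot, hTcard]
      · intro a ha b hb hba
        rcases Finset.mem_insert.mp hb with hbM | hbT
        · subst hbM
          have h1 : a ≤ s.max' hne := s.le_max' a ha
          have : a = s.max' hne := le_antisymm h1 hba
          exact this ▸ Finset.mem_insert_self _ _
        · by_cases haM : a = s.max' hne
          · exact haM ▸ Finset.mem_insert_self _ _
          · exact Finset.mem_insert_of_mem
              (hTup a (Finset.mem_erase.mpr ⟨haM, ha⟩) b hbT hba)

/-- `C` is a set of consecutive points (an interval in the real-line order)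
among the points arrived before time `t`. -/
def ConsecPrefix {n : ℕ} (x : Fin n → ℝ) (t : ℕ) (C : Finset (Fin n)) : Prop :=
  (∀ i ∈ C, (i : ℕ) < t) ∧
  ∀ i ∈ C, ∀ j ∈ C, ∀ m : Fin n, (m : ℕ) < t → x i ≤ x m → x m ≤ x j → m ∈ C

/-- No online 2-coloring algorithm has bounded monochromatic runs: for every
`m ≥ 1` and every deterministic online 2-coloring algorithm `A` (assigning to
each inserted point a color depending only on the previously inserted points
and the new point), there is an insertion sequence of distinct points such
that at some time the present points contain `m` consecutive points of the
same color. -/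
theorem no_bounded_online_two_coloring (m : ℕ) (hm : 1 ≤ m)
    (A : List ℝ → ℝ → Bool) :
    ∃ n : ℕ, ∃ x : Fin n → ℝ, Function.Injective x ∧
      let χ : Fin n → Bool := fun i => A ((List.ofFn x).take i) (x i)
      ∃ t : ℕ, t ≤ n ∧ ∃ C : Finset (Fin n), ConsecPrefix x t C ∧
        C.card = m ∧ ∃ c : Bool, ∀ i ∈ C, χ i = c := by
  classical
  set n : ℕ := 2*m - 1 with hn
  set x : Fin n → ℝ := fun i => advPt A i with hx
  have hinj : Function.Injective x := by
    intro i j h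
    exact Fin.ext (advPt_injective A h)
  -- the intrinsic color function
  set f : Fin n → Bool := fun i => A ((advRun A (i : ℕ)).1) (advPt A i) with hf
  have hχ : ∀ i : Fin n, A ((List.ofFn x).take i) (x i) = f i := by
    intro i
    simp only [hx, hf, take_ofFn_eq A n i]
  -- pigeonhole: some color has ≥ m points
  have hcards : (Finset.univ.filter (fun i => f i = true)).card
      + (Finset.univ.filter (fun i => f i = false)).card = n := by
    have h2 : (Finset.univ.filter (fun i => f i = false))
        = (Finset.univ.filter (fun i => ¬ f i = true)) := by
      apply Finset.filter_congr; intro i _; simp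
    rw [h2, Finset.card_filter_add_card_filter_not, Finset.card_univ, Fintype.card_fin]
  obtain ⟨c, hc⟩ : ∃ c : Bool, m ≤ (Finset.univ.filter (fun i => f i = c)).card := by
    by_cases h : m ≤ (Finset.univ.filter (fun i => f i = true)).card
    · exact ⟨true, h⟩
    · exact ⟨false, by omega⟩
  set S : Finset (Fin n) := Finset.univ.filter (fun i => f i = c) with hS
  have hs'card : m ≤ (S.image x).card := by
    rw [Finset.card_image_of_injective S hinj]; exact hc
  obtain ⟨T, hTsub, hTcard, hTup⟩ := exists_top m (S.image x) hs'card
  set C : Finset (Fin n) := S.filter (fun i => x i ∈ T) with hC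
  have hCmem : ∀ i, i ∈ C ↔ (f i = c ∧ x i ∈ T) := by
    intro i; simp [hC, hS]
  -- card C = m
  have hCimage : C.image x = T := by
    ext a
    constructor
    · intro ha
      obtain ⟨i, hi, rfl⟩ := Finset.mem_image.mp ha
      exact ((hCmem i).mp hi).2
    · intro ha
      obtain ⟨i, hi, rfl⟩ := Finset.mem_image.mp (hTsub ha)
      have hiS : f i = c := by simpa [hS] using hi
      exact Finset.mem_image.mpr ⟨i, (hCmem i).mpr ⟨hiS, ha⟩, rfl⟩
  have hCcard : C.card = m := by
    rw [← Finset.card_image_of_injective C hinj, hCimage, hTcard]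
  -- the invariant at time n
  have hinv := adv_invariant A n
  refine ⟨n, x, hinj, n, le_refl n, C, ⟨?_, ?_⟩, hCcard, c, ?_⟩
  · intro i _; exact i.isLt
  · intro i hi j hj mm _ hxi hxj
    obtain ⟨hfi, hxiT⟩ := (hCmem i).mp hi
    obtain ⟨hfj, _⟩ := (hCmem j).mp hj
    have hlohi := lo_lt_hi A n
    have hfm : f mm = c := by
      cases c with
      | true =>
          have hj' : advPt A (j : ℕ) ≤ (advRun A n).2.1 := (hinv j j.isLt).1 hfj
          by_contra hne
          have hmf : f mm = false := by
            cases hfmm : f mm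
            · rfl
            · exact absurd hfmm hne
          have := (hinv mm mm.isLt).2 hmf
          simp only [hx] at hxi hxj
          linarith
      | false =>
          have hi' : (advRun A n).2.2 ≤ advPt A (i : ℕ) := (hinv i i.isLt).2 hfi
          by_contra hne
          have hmf : f mm = true := by
            cases hfmm : f mm
            · exact absurd hfmm hne
            · rfl
          have := (hinv mm mm.isLt).1 hmf
          simp only [hx] at hxi hxj
          linarith
    have hmS : mm ∈ S := by simp [hS, hfm]
    have hxmT : x mm ∈ T :=
      hTup (x mm) (Finset.mem_image_of_mem x hmS) (x i) hxiT hxi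
    exact (hCmem mm).mpr ⟨hfm, hxmT⟩
  · intro i hi
    show A ((List.ofFn x).take i) (x i) = c
    rw [hχ i]
    exact ((hCmem i).mp hi).1
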